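/- Let R be a DVR with valuation v, and let (𝔞_p), (𝔟_p), (𝔠_p) be graded systems of nonzero ideals of R such that 𝔞_p · 𝔟_p ⊆ 𝔠_p for all p. Then the asymptotic orders satisfy v(𝔠_•) ≤ v(𝔞_•) + v(𝔟_•), where v(𝔡_•) := lim_p v(𝔡_p)/p. -/

import Mathlib

/-- Grading gives `(a p)^q ≤ a (p*q)`. -/
lemma pow_le_graded {R : Type*} [CommRing R] (a : ℕ → Ideal R)
    (ha0 : a 0 = ⊤) (hagr : ∀ p q, a p * a q ≤ a (p + q)) (p q : ℕ) :
    a p ^ q ≤ a (p * q) := by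
  induction q with
  | zero => simp [ha0]
  | succ n ih =>
      have : a p ^ (n + 1) = a p ^ n * a p := pow_succ _ _
      rw [this]
      calc a p ^ n * a p ≤ a (p * n) * a p := Ideal.mul_mono_left ih
        _ ≤ a (p * n + p) := hagr _ _
        _ = a (p * (n + 1)) := by ring_nf

/-- In a DVR, `m^n ≤ m^k` implies `k ≤ n`. -/
lemma pow_le_pow_exp {R : Type*} [CommRing R] [IsDomain R] [IsDiscreteValuationRing R]
    {n k : ℕ} (h : IsLocalRing.maximalIdeal R ^ n ≤ IsLocalRing.maximalIdeal R ^ k) :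
    k ≤ n := by
  obtain ⟨ϖ, hϖ⟩ := IsDiscreteValuationRing.exists_irreducible R
  have hm : IsLocalRing.maximalIdeal R = Ideal.span {ϖ} :=
    (IsDiscreteValuationRing.irreducible_iff_uniformizer ϖ).mp hϖ
  rw [hm, Ideal.span_singleton_pow, Ideal.span_singleton_pow,
    Ideal.span_singleton_le_span_singleton] at h
  exact (pow_dvd_pow_iff hϖ.ne_zero hϖ.not_isUnit).mp h

/-- If `(𝔞_p)`, `(𝔟_p)`, `(𝔠_p)` are graded systems of nonzero ideals in a DVR with
`𝔞_p · 𝔟_p ⊆ 𝔠_p` for all `p`, then the asymptotic orders (which equal the infima of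
`v(·_p)/p` over `p ≥ 1`) satisfy `v(𝔠_•) ≤ v(𝔞_•) + v(𝔟_•)`. -/
theorem stmt6 {R : Type*} [CommRing R] [IsDomain R] [IsDiscreteValuationRing R]
    (a b c : ℕ → Ideal R)
    (ha0 : a 0 = ⊤) (hane : ∀ p, a p ≠ ⊥) (hagr : ∀ p q, a p * a q ≤ a (p + q))
    (hb0 : b 0 = ⊤) (hbne : ∀ p, b p ≠ ⊥) (hbgr : ∀ p q, b p * b q ≤ b (p + q))
    (hc0 : c 0 = ⊤) (hcne : ∀ p, c p ≠ ⊥) (hcgr : ∀ p q, c p * c q ≤ c (p + q))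
    (hmul : ∀ p, a p * b p ≤ c p)
    (va vb vc : ℕ → ℕ)
    (hva : ∀ p, a p = IsLocalRing.maximalIdeal R ^ va p)
    (hvb : ∀ p, b p = IsLocalRing.maximalIdeal R ^ vb p)
    (hvc : ∀ p, c p = IsLocalRing.maximalIdeal R ^ vc p) :
    (⨅ p : {k : ℕ // 0 < k}, (vc p.val : ℝ) / (p.val : ℝ)) ≤
      (⨅ p : {k : ℕ // 0 < k}, (va p.val : ℝ) / (p.val : ℝ)) +
        (⨅ p : {k : ℕ // 0 < k}, (vb p.val : ℝ) / (p.val : ℝ)) := by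
  have : Nonempty {k : ℕ // 0 < k} := ⟨⟨1, one_pos⟩⟩
  apply le_ciInf_add_ciInf
  intro p q
  -- key inequality: vc (p*q) ≤ q * va p + p * vb q
  have hkey : vc (p.val * q.val) ≤ q.val * va p.val + p.val * vb q.val := by
    have h1 : a p.val ^ q.val ≤ a (p.val * q.val) := pow_le_graded a ha0 hagr _ _
    have h2 : b q.val ^ p.val ≤ b (q.val * p.val) := pow_le_graded b hb0 hbgr _ _
    have h3 : a p.val ^ q.val * b q.val ^ p.val ≤ c (p.val * q.val) := by
      calc a p.val ^ q.val * b q.val ^ p.val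
          ≤ a (p.val * q.val) * b (q.val * p.val) := Ideal.mul_mono h1 h2
        _ = a (p.val * q.val) * b (p.val * q.val) := by rw [mul_comm q.val p.val]
        _ ≤ c (p.val * q.val) := hmul _
    rw [hva, hvb, hvc, ← pow_mul, ← pow_mul, ← pow_add] at h3
    have := pow_le_pow_exp h3
    calc vc (p.val * q.val) ≤ va p.val * q.val + vb q.val * p.val := this
      _ = q.val * va p.val + p.val * vb q.val := by ring
  -- now real arithmetic
  have hbdd : BddBelow (Set.range fun p : {k : ℕ // 0 < k} => (vc p.val : ℝ) / (p.val : ℝ)) := by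
    refine ⟨0, ?_⟩
    rintro x ⟨r, rfl⟩
    positivity
  have hpq : (0 : ℕ) < p.val * q.val := Nat.mul_pos p.prop q.prop
  have hle : (⨅ r : {k : ℕ // 0 < k}, (vc r.val : ℝ) / (r.val : ℝ)) ≤
      (vc (p.val * q.val) : ℝ) / ((p.val * q.val : ℕ) : ℝ) :=
    ciInf_le hbdd ⟨p.val * q.val, hpq⟩
  refine hle.trans ?_
  have hp : (0 : ℝ) < (p.val : ℝ) := by exact_mod_cast p.prop
  have hq : (0 : ℝ) < (q.val : ℝ) := by exact_mod_cast q.prop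
  rw [div_le_iff₀ (by positivity : (0:ℝ) < ((p.val * q.val : ℕ) : ℝ))]
  push_cast
  have h' : (vc (p.val * q.val) : ℝ) ≤ q.val * va p.val + p.val * vb q.val := by
    exact_mod_cast hkey
  refine h'.trans ?_
  rw [add_mul]
  have e1 : (va p.val : ℝ) / p.val * (p.val * q.val) = q.val * va p.val := by
    field_simp
  have e2 : (vb q.val : ℝ) / q.val * (p.val * q.val) = p.val * vb q.val := by
    field_simp
  rw [e1, e2]
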